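/- For even n = 2k with n ≥ 4, the schedule generated by the circle design has games-played difference index 1: after any prefix of the schedule, the numbers of games played by any two teams differ by at most 1. -/

import Mathlib

/-- `f` lists the games of a single round-robin tournament on `n` teams:
positions `0, ..., N-1` are in bijection with the unordered pairs of distinct teams. -/
def isSchedule (n N : ℕ) (f : ℕ → Sym2 (Fin n)) : Prop :=
  (∀ i, i < N → ¬ (f i).IsDiag) ∧
  ∀ p : Sym2 (Fin n), ¬ p.IsDiag → ∃! i, i < N ∧ f i = p

/-- The schedule has guaranteed rest time at least `b`: any two games involving a
common team `t` are separated by at least `b` games not involving `t`. -/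
def hasRest (n N : ℕ) (f : ℕ → Sym2 (Fin n)) (b : ℕ) : Prop :=
  ∀ t : Fin n, ∀ i j, i < j → j < N → t ∈ f i → t ∈ f j →
    b ≤ ((Finset.Ioo i j).filter (fun l => t ∉ f l)).card

/-- Number of games played by team `t` in the first `m` games. -/
def played (n : ℕ) (f : ℕ → Sym2 (Fin n)) (t : Fin n) (m : ℕ) : ℕ :=
  ((Finset.range m).filter (fun i => t ∈ f i)).card

/-- The games-played difference index is at most `p`. -/
def gpLe (n N : ℕ) (f : ℕ → Sym2 (Fin n)) (p : ℕ) : Prop :=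
  ∀ m, m ≤ N → ∀ t1 t2 : Fin n, played n f t1 m ≤ played n f t2 m + p

/-- The rest of team `t` going into the game at position `i`: the number of games since
`t`'s previous game, where all teams play an imaginary game one slot before game `0`. -/
def rest (n : ℕ) (f : ℕ → Sym2 (Fin n)) (t : Fin n) (i : ℕ) : ℕ :=
  ((Finset.range i).filter (fun j => ∀ l, j ≤ l → l < i → t ∉ f l)).card

/-- The rest difference index is at most `d`. -/
def rdLe (n N : ℕ) (f : ℕ → Sym2 (Fin n)) (d : ℕ) : Prop :=
  ∀ i, i < N → ∀ t1 t2 : Fin n, t1 ∈ f i → t2 ∈ f i →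
    rest n f t1 i ≤ rest n f t2 i + d

/-- Circle design for `n = 2k` teams (0-indexed teams; team `t` is team `t+1` of the
paper): team `0` is fixed at the top-left; the other `2k-1` teams occupy cyclic
positions `0, ..., 2k-2` (top-row columns `1..k-1` left to right, then bottom-row
columns `k-1` down to `0`), each rotating one step per round.
`circleTeamE k hk r c` is the team at cyclic position `c` in round `r`. -/
def circleTeamE (k : ℕ) (hk : 0 < k) (r c : ℕ) : Fin (2*k) :=
  ⟨(c + (2*k-1) - r % (2*k-1)) % (2*k-1) + 1, by
    have h := Nat.mod_lt (c + (2*k-1) - r % (2*k-1)) (y := 2*k-1) (by omega)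
    omega⟩

/-- The `i`-th game (0-indexed) of the asynchronous circle-design schedule for `2k`
teams: round `i / k`, column `i % k`, columns read left to right. -/
def circleGameE (k : ℕ) (hk : 0 < k) (i : ℕ) : Sym2 (Fin (2*k)) :=
  if i % k = 0 then s(⟨0, by omega⟩, circleTeamE k hk (i / k) (2*k-2))
  else s(circleTeamE k hk (i / k) (i % k - 1), circleTeamE k hk (i / k) (2*k-2 - i % k))

lemma CD_mod_inv1 (M rm p : ℕ) (hp : p < M) (hrm : rm < M) :
    ((p + M - rm) % M + rm) % M = p := by
  have h1 : ((p + M - rm) % M + rm) % M = ((p + M - rm) + rm) % M :=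
    (Nat.mod_modEq _ M).add_right rm
  have h2 : (p + M - rm) + rm = p + M := by omega
  rw [h1, h2, Nat.add_mod_right, Nat.mod_eq_of_lt hp]

lemma CD_mod_inv2 (M rm v : ℕ) (hv : v < M) (hrm : rm < M) :
    ((v + rm) % M + M - rm) % M = v := by
  have h0 : (v + rm) % M + M - rm = (v + rm) % M + (M - rm) := by omega
  have h1 : ((v + rm) % M + (M - rm)) % M = ((v + rm) + (M - rm)) % M :=
    (Nat.mod_modEq _ M).add_right (M - rm)
  have h2 : (v + rm) + (M - rm) = v + M := by omega
  rw [h0, h1, h2, Nat.add_mod_right, Nat.mod_eq_of_lt hv]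

lemma CD_teamE_eq_iff (k : ℕ) (h0 : 0 < k) (r p : ℕ) (hp : p < 2*k-1) (t : Fin (2*k)) :
    circleTeamE k h0 r p = t ↔
      1 ≤ t.val ∧ p = (t.val - 1 + r % (2*k-1)) % (2*k-1) := by
  have hrm : r % (2*k-1) < 2*k-1 := Nat.mod_lt _ (by omega)
  rw [Fin.ext_iff]
  show (p + (2*k-1) - r % (2*k-1)) % (2*k-1) + 1 = t.val ↔ _
  constructor
  · intro h
    refine ⟨by omega, ?_⟩
    have hv : t.val - 1 = (p + (2*k-1) - r % (2*k-1)) % (2*k-1) := by omega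
    rw [hv, CD_mod_inv1 _ _ _ hp hrm]
  · rintro ⟨h1, hpe⟩
    have hv : t.val - 1 < 2*k-1 := by omega
    rw [hpe, CD_mod_inv2 _ _ _ hv hrm]
    omega

def CD_cOf (k : ℕ) (t : Fin (2*k)) (r : ℕ) : ℕ :=
  if t.val = 0 then 0 else
    if (t.val - 1 + r % (2*k-1)) % (2*k-1) = 2*k-2 then 0
    else if (t.val - 1 + r % (2*k-1)) % (2*k-1) ≤ k-2 then
      (t.val - 1 + r % (2*k-1)) % (2*k-1) + 1
    else 2*k-2 - (t.val - 1 + r % (2*k-1)) % (2*k-1)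

lemma CD_CD_cOf_lt (k : ℕ) (hk : 2 ≤ k) (t : Fin (2*k)) (r : ℕ) : CD_cOf k t r < k := by
  have hPlt : (t.val - 1 + r % (2*k-1)) % (2*k-1) < 2*k-1 := Nat.mod_lt _ (by omega)
  unfold CD_cOf
  generalize (t.val - 1 + r % (2*k-1)) % (2*k-1) = P at *
  split_ifs <;> (try simp only [iff_false, iff_true, not_or, not_and]) <;> omega

lemma CD_mem_game_iff (k : ℕ) (hk : 2 ≤ k) (h0 : 0 < k) (r c : ℕ) (hc : c < k) (t : Fin (2*k)) :
    t ∈ circleGameE k h0 (r*k + c) ↔ c = CD_cOf k t r := by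
  have hmod : (r*k + c) % k = c := by
    rw [Nat.add_comm, Nat.add_mul_mod_self_right, Nat.mod_eq_of_lt hc]
  have hdiv : (r*k + c) / k = r := by
    rw [Nat.add_comm, Nat.add_mul_div_right _ _ h0, Nat.div_eq_of_lt hc, Nat.zero_add]
  have hPlt : (t.val - 1 + r % (2*k-1)) % (2*k-1) < 2*k-1 := Nat.mod_lt _ (by omega)
  have htlt := t.isLt
  unfold circleGameE
  rw [hmod, hdiv]
  by_cases hc0 : c = 0
  · subst hc0
    rw [if_pos rfl, Sym2.mem_iff]
    have h2 : (t = circleTeamE k h0 r (2*k-2)) ↔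
        (1 ≤ t.val ∧ 2*k-2 = (t.val - 1 + r % (2*k-1)) % (2*k-1)) :=
      eq_comm.trans (CD_teamE_eq_iff k h0 r _ (by omega) t)
    have h3 : (t = (⟨0, by omega⟩ : Fin (2*k))) ↔ t.val = 0 := by
      rw [Fin.ext_iff]
    rw [h2, h3]
    clear h2 h3
    unfold CD_cOf
    generalize (t.val - 1 + r % (2*k-1)) % (2*k-1) = P at *
    split_ifs <;> (try simp only [iff_false, iff_true, not_or, not_and]) <;> omega
  · rw [if_neg hc0, Sym2.mem_iff]
    have h2 : (t = circleTeamE k h0 r (c - 1)) ↔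
        (1 ≤ t.val ∧ c - 1 = (t.val - 1 + r % (2*k-1)) % (2*k-1)) :=
      eq_comm.trans (CD_teamE_eq_iff k h0 r _ (by omega) t)
    have h3 : (t = circleTeamE k h0 r (2*k-2 - c)) ↔
        (1 ≤ t.val ∧ 2*k-2 - c = (t.val - 1 + r % (2*k-1)) % (2*k-1)) :=
      eq_comm.trans (CD_teamE_eq_iff k h0 r _ (by omega) t)
    rw [h2, h3]
    clear h2 h3
    unfold CD_cOf
    generalize (t.val - 1 + r % (2*k-1)) % (2*k-1) = P at *
    split_ifs <;> (try simp only [iff_false, iff_true, not_or, not_and]) <;> omega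

lemma CD_round_card (k : ℕ) (hk : 2 ≤ k) (h0 : 0 < k) (t : Fin (2*k)) (r : ℕ) :
    ((Finset.Ico (r*k) (r*k+k)).filter (fun i => t ∈ circleGameE k h0 i)).card = 1 := by
  rw [Finset.card_eq_one]
  refine ⟨r*k + CD_cOf k t r, ?_⟩
  ext i
  simp only [Finset.mem_filter, Finset.mem_Ico, Finset.mem_singleton]
  constructor
  · rintro ⟨⟨h1, h2⟩, h3⟩
    have hc : i - r*k < k := by omega
    have heq : r*k + (i - r*k) = i := by omega
    have := (CD_mem_game_iff k hk h0 r (i - r*k) hc t).1 (by rwa [heq])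
    omega
  · rintro rfl
    have hck : CD_cOf k t r < k := CD_CD_cOf_lt k hk t r
    exact ⟨⟨by omega, by omega⟩, (CD_mem_game_iff k hk h0 r _ hck t).2 rfl⟩

lemma CD_played_mul (k : ℕ) (hk : 2 ≤ k) (h0 : 0 < k) (t : Fin (2*k)) (q : ℕ) :
    played (2*k) (circleGameE k h0) t (q*k) = q := by
  induction q with
  | zero => simp [played]
  | succ q ih =>
    have hsplit : Finset.range ((q+1)*k) = Finset.range (q*k) ∪ Finset.Ico (q*k) (q*k+k) := by
      rw [Finset.range_eq_Ico, Finset.range_eq_Ico,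
        Finset.Ico_union_Ico_eq_Ico (by omega : 0 ≤ q*k) (by omega : q*k ≤ q*k+k)]
      congr 1
      ring
    have hdisj : Disjoint (Finset.range (q*k)) (Finset.Ico (q*k) (q*k+k)) := by
      rw [Finset.disjoint_left]
      intro a ha hb
      simp only [Finset.mem_range] at ha
      simp only [Finset.mem_Ico] at hb
      omega
    unfold played
    rw [hsplit, Finset.filter_union,
      Finset.card_union_of_disjoint (hdisj.mono (Finset.filter_subset _ _) (Finset.filter_subset _ _))]
    rw [CD_round_card k hk h0 t q]
    unfold played at ih
    omega

lemma CD_played_mono (n : ℕ) (f : ℕ → Sym2 (Fin n)) (t : Fin n) {m1 m2 : ℕ} (h : m1 ≤ m2) :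
    played n f t m1 ≤ played n f t m2 :=
  Finset.card_le_card (Finset.filter_subset_filter _ (Finset.range_subset_range.2 h))

theorem CD_stmt10aux (k : ℕ) (hk : 2 ≤ k) (h0 : 0 < k) :
    ∀ m, ∀ t1 t2 : Fin (2*k),
      played (2*k) (circleGameE k h0) t1 m ≤ played (2*k) (circleGameE k h0) t2 m + 1 := by
  intro m t1 t2
  obtain ⟨q, s, hs, rfl⟩ : ∃ q s, s < k ∧ m = q*k + s :=
    ⟨m / k, m % k, Nat.mod_lt _ h0, (Nat.div_add_mod' m k).symm⟩
  have h1 : played (2*k) (circleGameE k h0) t1 (q*k+s) ≤ q + 1 := by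
    have := CD_played_mono (2*k) (circleGameE k h0) t1 (show q*k+s ≤ (q+1)*k by nlinarith)
    rw [CD_played_mul k hk h0 t1 (q+1)] at this
    exact this
  have h2 : q ≤ played (2*k) (circleGameE k h0) t2 (q*k+s) := by
    have := CD_played_mono (2*k) (circleGameE k h0) t2 (show q*k ≤ q*k+s by omega)
    rwa [CD_played_mul k hk h0 t2 q] at this
  omega

/-- For even `n = 2k ≥ 4`, the circle-design schedule has games-played difference
index `1`: after any prefix, any two teams' game counts differ by at most `1`. -/
theorem stmt10 (k : ℕ) (hk : 2 ≤ k) :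
    gpLe (2*k) (2*k*(2*k-1)/2) (circleGameE k (by omega)) 1 := by
  intro m _ t1 t2
  exact CD_stmt10aux k hk (by omega) m t1 t2
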